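/- Let (Ω, F, P) be a probability space and let F*, G*, H* be sub-σ-algebras such that F* is independent of H*, G* is independent of H*, and F* and G* are conditionally independent given H*. Then the σ-algebra generated by F* ∪ G* is independent of H*. -/

import Mathlib

open MeasureTheory ProbabilityTheory

private lemma key_aux {Ω : Type*} {F : MeasurableSpace Ω} (P : Measure Ω) [IsProbabilityMeasure P]
    (mF mG mH : MeasurableSpace Ω) (hmF : mF ≤ F) (hmG : mG ≤ F) (hmH : mH ≤ F)
    (hFH : Indep mF mH P) (hGH : Indep mG mH P)
    (hcond : ∀ A B : Set Ω, MeasurableSet[mF] A → MeasurableSet[mG] B →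
      condExp mH P ((A ∩ B).indicator (fun _ => (1:ℝ))) =ᵐ[P]
        fun ω => (condExp mH P (A.indicator (fun _ => (1:ℝ))) ω) *
          (condExp mH P (B.indicator (fun _ => (1:ℝ))) ω))
    {A B C : Set Ω} (hA : MeasurableSet[mF] A) (hB : MeasurableSet[mG] B)
    (hC : MeasurableSet[mH] C) :
    (P ((A ∩ B) ∩ C)).toReal = (P A).toReal * (P B).toReal * (P C).toReal := by
  letI : MeasurableSpace Ω := F
  haveI : SigmaFinite (P.trim hmH) := by infer_instance
  have hAF : MeasurableSet[F] A := hmF A hA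
  have hBF : MeasurableSet[F] B := hmG B hB
  have hCF : MeasurableSet[F] C := hmH C hC
  have hint : Integrable ((A ∩ B).indicator (fun _ => (1:ℝ))) P :=
    (integrable_const (1:ℝ)).indicator (hAF.inter hBF)
  have h1 : (P ((A ∩ B) ∩ C)).toReal
      = ∫ ω in C, (A ∩ B).indicator (fun _ => (1:ℝ)) ω ∂P := by
    rw [setIntegral_indicator (hAF.inter hBF), setIntegral_const, smul_eq_mul, mul_one,
      Set.inter_comm C, measureReal_def]
  have h2 : ∫ ω in C, (A ∩ B).indicator (fun _ => (1:ℝ)) ω ∂P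
      = ∫ ω in C, (condExp mH P ((A ∩ B).indicator (fun _ => (1:ℝ)))) ω ∂P :=
    (setIntegral_condExp hmH hint hC).symm
  have hcA : condExp mH P (A.indicator (fun _ => (1:ℝ))) =ᵐ[P]
      fun _ => (P A).toReal := by
    refine (condExp_indep_eq hmF hmH
      ((stronglyMeasurable_const (b := (1:ℝ))).indicator hA) hFH).trans ?_
    filter_upwards with ω
    rw [integral_indicator hAF, setIntegral_const, smul_eq_mul, mul_one, measureReal_def]
  have hcB : condExp mH P (B.indicator (fun _ => (1:ℝ))) =ᵐ[P]
      fun _ => (P B).toReal := by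
    refine (condExp_indep_eq hmG hmH
      ((stronglyMeasurable_const (b := (1:ℝ))).indicator hB) hGH).trans ?_
    filter_upwards with ω
    rw [integral_indicator hBF, setIntegral_const, smul_eq_mul, mul_one, measureReal_def]
  have hc : condExp mH P ((A ∩ B).indicator (fun _ => (1:ℝ))) =ᵐ[P]
      fun _ => (P A).toReal * (P B).toReal := by
    filter_upwards [hcond A B hA hB, hcA, hcB] with ω h1 h2 h3
    rw [h1, h2, h3]
  have h3 : ∫ ω in C, (condExp mH P ((A ∩ B).indicator (fun _ => (1:ℝ)))) ω ∂P
      = ∫ _ω in C, ((P A).toReal * (P B).toReal) ∂P :=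
    setIntegral_congr_ae hCF (hc.mono fun ω h _ => h)
  rw [h1, h2, h3, setIntegral_const, smul_eq_mul, measureReal_def]
  ring

theorem stmt_0 {Ω : Type*} {F : MeasurableSpace Ω} (P : Measure Ω) [IsProbabilityMeasure P]
    (mF mG mH : MeasurableSpace Ω) (hmF : mF ≤ F) (hmG : mG ≤ F) (hmH : mH ≤ F)
    (hFH : Indep mF mH P) (hGH : Indep mG mH P)
    (hcond : ∀ A B : Set Ω, MeasurableSet[mF] A → MeasurableSet[mG] B →
      condExp mH P ((A ∩ B).indicator (fun _ => (1:ℝ))) =ᵐ[P]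
        fun ω => (condExp mH P (A.indicator (fun _ => (1:ℝ))) ω) *
          (condExp mH P (B.indicator (fun _ => (1:ℝ))) ω)) :
    Indep (mF ⊔ mG) mH P := by
  letI : MeasurableSpace Ω := F
  set p1 : Set (Set Ω) :=
    {s | ∃ A B, MeasurableSet[mF] A ∧ MeasurableSet[mG] B ∧ s = A ∩ B} with hp1def
  have hgen1 : mF ⊔ mG = MeasurableSpace.generateFrom p1 := by
    refine le_antisymm (sup_le ?_ ?_) ?_
    · intro s hs
      exact MeasurableSpace.measurableSet_generateFrom
        ⟨s, Set.univ, hs, MeasurableSet.univ, (Set.inter_univ s).symm⟩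
    · intro s hs
      exact MeasurableSpace.measurableSet_generateFrom
        ⟨Set.univ, s, MeasurableSet.univ, hs, (Set.univ_inter s).symm⟩
    · refine MeasurableSpace.generateFrom_le ?_
      rintro s ⟨A, B, hA, hB, rfl⟩
      have h1 : MeasurableSet[mF ⊔ mG] A := le_sup_left (α := MeasurableSpace Ω) A hA
      have h2 : MeasurableSet[mF ⊔ mG] B := le_sup_right (α := MeasurableSpace Ω) B hB
      exact h1.inter h2
  have hpi1 : IsPiSystem p1 := by
    rintro s ⟨A1, B1, hA1, hB1, rfl⟩ t ⟨A2, B2, hA2, hB2, rfl⟩ -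
    exact ⟨A1 ∩ A2, B1 ∩ B2, hA1.inter hA2, hB1.inter hB2, by
      rw [Set.inter_inter_inter_comm]⟩
  have hgen2 : mH = MeasurableSpace.generateFrom {s | MeasurableSet[mH] s} :=
    (@MeasurableSpace.generateFrom_measurableSet Ω mH).symm
  refine IndepSets.indep (sup_le hmF hmG) hmH hpi1
    (@MeasurableSpace.isPiSystem_measurableSet Ω mH) hgen1 hgen2 ?_
  rw [IndepSets_iff]
  rintro s C ⟨A, B, hA, hB, rfl⟩ hC
  have hC' : MeasurableSet[mH] C := hC
  have hAB : (P (A ∩ B)).toReal = (P A).toReal * (P B).toReal := by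
    have := key_aux P mF mG mH hmF hmG hmH hFH hGH hcond hA hB (MeasurableSet.univ (α := Ω))
    simpa using this
  have h := key_aux P mF mG mH hmF hmG hmH hFH hGH hcond hA hB hC'
  rw [← hAB] at h
  have hfin1 : P ((A ∩ B) ∩ C) ≠ ⊤ := measure_ne_top P _
  have hfin2 : P (A ∩ B) * P C ≠ ⊤ :=
    ENNReal.mul_ne_top (measure_ne_top P _) (measure_ne_top P _)
  rw [← ENNReal.toReal_eq_toReal_iff' hfin1 hfin2, ENNReal.toReal_mul]
  exact h
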